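/- arXiv:2006.14757 — 3 statements merged into one kernel-verified Lean document; each statement's English description precedes it below -/
import Mathlib

section
/- For every n ≥ 0, (2α/h_n(t)) ∫_{-1}^{1} P_n(y,t)^2·w(y,t)/(1-y^2) dy = 2n+1+2α+R_n(t). Equivalently, (2t/h_n(t)) ∫_{-1}^{1} P_n(y,t)^2·w(y,t)/y^2 dy = -(2n+1+2α) + (2α/h_n(t)) ∫_{-1}^{1} P_n(y,t)^2·w(y,t)/(1-y^2) dy. -/
open MeasureTheory intervalIntegral Real Set Filter Topology Polynomial

section Aux

variable {α t : ℝ} {w : ℝ → ℝ}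

private lemma decayB (ht : 0 < t) :
    Tendsto (fun x : ℝ => Real.exp (-t / x ^ 2) / x ^ 2) (𝓝[≠] (0:ℝ)) (𝓝 0) := by
  have h1 : Tendsto (fun x : ℝ => (x ^ 2)⁻¹) (𝓝[≠] (0:ℝ)) atTop := by
    apply tendsto_inv_nhdsGT_zero.comp
    rw [tendsto_nhdsWithin_iff]
    constructor
    · simpa using ((continuous_pow 2).tendsto (0:ℝ)).mono_left nhdsWithin_le_nhds
    · filter_upwards [self_mem_nhdsWithin] with x hx
      have hx0 : x ≠ 0 := hx
      exact mem_Ioi.2 (by positivity)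
  have h2 : Tendsto (fun u : ℝ => u * Real.exp (-t * u)) atTop (𝓝 0) := by
    have := tendsto_rpow_mul_exp_neg_mul_atTop_nhds_zero 1 t ht
    refine this.congr' ?_
    filter_upwards [eventually_ge_atTop (0:ℝ)] with u hu
    rw [Real.rpow_one]
  refine (h2.comp h1).congr ?_
  intro x
  simp only [Function.comp]
  rw [div_eq_mul_inv, mul_comm, neg_div, div_eq_mul_inv, neg_mul]


private lemma hev_aux : ∀ᶠ x : ℝ in 𝓝[≠] (0:ℝ), x ≠ 0 ∧ |x| ≤ 1 := by
  have h1 : ∀ᶠ x : ℝ in 𝓝 (0:ℝ), |x| ≤ 1 := by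
    filter_upwards [Metric.ball_mem_nhds (0:ℝ) one_pos] with y hy
    simp only [Metric.mem_ball, Real.dist_eq, sub_zero] at hy
    exact hy.le
  filter_upwards [h1.filter_mono nhdsWithin_le_nhds, self_mem_nhdsWithin] with x h1 h2
  exact ⟨h2, h1⟩

private lemma g_contAt (hα : 0 < α) {x : ℝ} (hx : x ≠ 0) :
    ContinuousAt (fun y : ℝ => (1 - y ^ 2) ^ α * Real.exp (-t / y ^ 2)) x := by
  have h1 : ContinuousAt (fun y : ℝ => (1 - y ^ 2) ^ α) x :=
    (Real.continuousAt_rpow_const _ α (Or.inr hα.le)).comp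
      (by fun_prop : ContinuousAt (fun y : ℝ => 1 - y ^ 2) x)
  have h2 : ContinuousAt (fun y : ℝ => Real.exp (-t / y ^ 2)) x := by
    apply Real.continuous_exp.continuousAt.comp
    exact continuousAt_const.div (by fun_prop) (pow_ne_zero 2 hx)
  exact h1.mul h2

/-- basic bounds on w near 0 -/
private lemma w_bounds (hα : 0 < α) (ht : 0 < t)
    (hw : ∀ x : ℝ, x ≠ 0 → w x = (1 - x ^ 2) ^ α * Real.exp (-t / x ^ 2))
    {x : ℝ} (hx : x ≠ 0) (hx1 : |x| ≤ 1) :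
    0 ≤ w x ∧ w x ≤ Real.exp (-t / x ^ 2) := by
  have hx2 : x ^ 2 ≤ 1 := by
    calc x ^ 2 = |x| ^ 2 := (sq_abs x).symm
    _ ≤ 1 := by nlinarith [abs_nonneg x]
  have hb0 : (0:ℝ) ≤ 1 - x ^ 2 := by linarith
  have hb1 : (1:ℝ) - x ^ 2 ≤ 1 := by nlinarith [sq_nonneg x]
  rw [hw x hx]
  constructor
  · positivity
  · have h1 : (1 - x ^ 2) ^ α ≤ 1 := Real.rpow_le_one hb0 hb1 hα.le
    nlinarith [Real.exp_pos (-t / x ^ 2), Real.rpow_nonneg hb0 α]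

private lemma w_cont (hα : 0 < α) (ht : 0 < t)
    (hw : ∀ x : ℝ, x ≠ 0 → w x = (1 - x ^ 2) ^ α * Real.exp (-t / x ^ 2))
    (hw0 : w 0 = 0) : Continuous w := by
  rw [continuous_iff_continuousAt]
  intro x
  rcases eq_or_ne x 0 with rfl | hx
  · rw [← continuousWithinAt_compl_self]
    unfold ContinuousWithinAt
    rw [hw0]
    apply squeeze_zero' ?_ ?_ (decayB ht)
    · filter_upwards [hev_aux] with x hx
      exact (w_bounds hα ht hw hx.1 hx.2).1
    · filter_upwards [hev_aux] with x hx
      have hx2 : (0:ℝ) < x ^ 2 := by have := hx.1; positivity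
      calc w x ≤ Real.exp (-t / x ^ 2) := (w_bounds hα ht hw hx.1 hx.2).2
      _ ≤ Real.exp (-t / x ^ 2) / x ^ 2 := by
          rw [le_div_iff₀ hx2]
          have hx2' : x ^ 2 ≤ 1 := by
            calc x ^ 2 = |x| ^ 2 := (sq_abs x).symm
            _ ≤ 1 := by nlinarith [abs_nonneg x, hx.2]
          nlinarith [Real.exp_pos (-t / x ^ 2)]
  · exact (g_contAt hα hx).congr (by
      filter_upwards [eventually_ne_nhds hx] with y hy
      exact (hw y hy).symm)

private lemma w_div_sq_cont (hα : 0 < α) (ht : 0 < t)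
    (hw : ∀ x : ℝ, x ≠ 0 → w x = (1 - x ^ 2) ^ α * Real.exp (-t / x ^ 2))
    (hw0 : w 0 = 0) : Continuous (fun x => w x / x ^ 2) := by
  rw [continuous_iff_continuousAt]
  intro x
  rcases eq_or_ne x 0 with rfl | hx
  · rw [← continuousWithinAt_compl_self]
    unfold ContinuousWithinAt
    have h0 : (fun x : ℝ => w x / x ^ 2) 0 = 0 := by simp [hw0]
    rw [h0]
    apply squeeze_zero' ?_ ?_ (decayB ht)
    · filter_upwards [hev_aux] with x hx
      have hx2 : (0:ℝ) < x ^ 2 := by have := hx.1; positivity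
      exact div_nonneg (w_bounds hα ht hw hx.1 hx.2).1 hx2.le
    · filter_upwards [hev_aux] with x hx
      have hx2 : (0:ℝ) < x ^ 2 := by have := hx.1; positivity
      exact div_le_div₀ (Real.exp_pos _).le (w_bounds hα ht hw hx.1 hx.2).2 hx2 le_rfl
  · exact (w_cont hα ht hw hw0).continuousAt.div (by fun_prop) (pow_ne_zero 2 hx)

private lemma w_deriv_zero (hα : 0 < α) (ht : 0 < t)
    (hw : ∀ x : ℝ, x ≠ 0 → w x = (1 - x ^ 2) ^ α * Real.exp (-t / x ^ 2))
    (hw0 : w 0 = 0) : HasDerivAt w 0 0 := by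
  rw [hasDerivAt_iff_tendsto_slope]
  apply squeeze_zero_norm' ?_ (decayB ht)
  filter_upwards [hev_aux] with x hx
  obtain ⟨hx0, hx1⟩ := hx
  have hx2 : (0:ℝ) < x ^ 2 := by positivity
  have hsl : slope w 0 x = w x / x := by
    rw [slope_def_field]; simp [hw0]
  rw [hsl, Real.norm_eq_abs, abs_div, abs_of_nonneg (w_bounds hα ht hw hx0 hx1).1]
  apply div_le_div₀ (Real.exp_pos _).le (w_bounds hα ht hw hx0 hx1).2 hx2
  calc x ^ 2 = |x| * |x| := by rw [← sq_abs]; ring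
  _ ≤ 1 * |x| := by nlinarith [abs_nonneg x]
  _ = |x| := one_mul _

private lemma w_deriv (hα : 0 < α) (ht : 0 < t)
    (hw : ∀ x : ℝ, x ≠ 0 → w x = (1 - x ^ 2) ^ α * Real.exp (-t / x ^ 2))
    {x : ℝ} (hx : x ≠ 0) (hx1 : x ∈ Set.Ioo (-1:ℝ) 1) :
    HasDerivAt w ((-2 * α * x / (1 - x ^ 2) + 2 * t / x ^ 3) * w x) x := by
  obtain ⟨hxl, hxr⟩ := hx1
  have hb : (0:ℝ) < 1 - x ^ 2 := by nlinarith
  have hx2 : x ^ 2 ≠ 0 := pow_ne_zero 2 hx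
  have h1 : HasDerivAt (fun y : ℝ => (1 - y ^ 2) ^ α)
      (α * (1 - x ^ 2) ^ (α - 1) * (-(2 * x))) x := by
    have hbase : HasDerivAt (fun y : ℝ => 1 - y ^ 2) (-(2 * x)) x := by
      exact ((hasDerivAt_const x (1:ℝ)).sub (hasDerivAt_pow 2 x)).congr_deriv (by norm_num)
    exact (Real.hasDerivAt_rpow_const (Or.inl hb.ne')).comp x hbase
  have h2 : HasDerivAt (fun y : ℝ => Real.exp (-t / y ^ 2))
      (Real.exp (-t / x ^ 2) * (2 * t / x ^ 3)) x := by
    have hin : HasDerivAt (fun y : ℝ => -t / y ^ 2) (2 * t / x ^ 3) x := by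
      have := (hasDerivAt_const x (-t)).div (hasDerivAt_pow 2 x) hx2
      refine this.congr_deriv ?_
      field_simp
      ring
    exact (Real.hasDerivAt_exp _).comp x hin
  have h3 := h1.mul h2
  have key : w =ᶠ[𝓝 x] fun y => (1 - y ^ 2) ^ α * Real.exp (-t / y ^ 2) := by
    filter_upwards [eventually_ne_nhds hx] with y hy using hw y hy
  have hrp : (1 - x ^ 2) ^ (α - 1) = (1 - x ^ 2) ^ α / (1 - x ^ 2) := by
    rw [Real.rpow_sub hb, Real.rpow_one]
  have h4 : HasDerivAt (fun y : ℝ => (1 - y ^ 2) ^ α * Real.exp (-t / y ^ 2))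
      ((-2 * α * x / (1 - x ^ 2) + 2 * t / x ^ 3)
        * ((1 - x ^ 2) ^ α * Real.exp (-t / x ^ 2))) x := by
    refine h3.congr_deriv ?_
    rw [hrp]
    field_simp
  rw [hw x hx]
  exact h4.congr_of_eventuallyEq key

private lemma degree_lt_of_coeff_zero (Q : Polynomial ℝ) (m : ℕ)
    (hle : Q.degree ≤ (m : ℕ)) (hc : Q.coeff m = 0) : Q.degree < (m : ℕ) := by
  rcases lt_or_eq_of_le hle with hlt | heq
  · exact hlt
  · exfalso
    have hne : Q ≠ 0 := fun h0 => by simp [h0] at heq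
    have hlc : Q.leadingCoeff ≠ 0 := Polynomial.leadingCoeff_ne_zero.mpr hne
    apply hlc
    have hnat : Q.natDegree = m := Polynomial.natDegree_eq_of_degree_eq_some heq
    rw [Polynomial.leadingCoeff, hnat]
    exact hc

private lemma w_edge_integrable (hα : 0 < α) (ht : 0 < t)
    (hw : ∀ x : ℝ, x ≠ 0 → w x = (1 - x ^ 2) ^ α * Real.exp (-t / x ^ 2))
    (hw0 : w 0 = 0) (wc : Continuous w)
    (p : Polynomial ℝ) :
    IntervalIntegrable (fun x => (p.eval x) ^ 2 * w x / (1 - x ^ 2)) volume (-1) 1 := by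
  obtain ⟨C₁, hC₁⟩ := (isCompact_Icc (a := (-1:ℝ)) (b := 1)).exists_bound_of_continuousOn
    (Polynomial.continuous p).continuousOn
  set M : ℝ := max 1 ((2:ℝ) ^ (α - 1)) with hM
  have hM1 : (1:ℝ) ≤ M := le_max_left _ _
  set C : ℝ := C₁ ^ 2 * M with hC
  have hC₁0 : 0 ≤ C₁ := le_trans (norm_nonneg _) (hC₁ 0 (by norm_num))
  have hC0 : 0 ≤ C := by positivity
  have hMle : ∀ u : ℝ, 1 ≤ u → u ≤ 2 → u ^ (α - 1) ≤ M := by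
    intro u h1 h2
    rcases le_or_gt 1 α with hα1 | hα1
    · calc u ^ (α - 1) ≤ (2:ℝ) ^ (α - 1) :=
            Real.rpow_le_rpow (by linarith) h2 (by linarith)
      _ ≤ M := le_max_right _ _
    · exact (Real.rpow_le_one_of_one_le_of_nonpos h1 (by linarith)).trans hM1
  have hwle : ∀ x ∈ Ioo (-1:ℝ) 1, 0 ≤ w x ∧ w x ≤ (1 - x ^ 2) ^ α := by
    intro x hx
    rcases eq_or_ne x 0 with rfl | hx0
    · constructor
      · simp [hw0]
      · rw [hw0]; positivity
    · rw [hw x hx0]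
      have hb : (0:ℝ) ≤ 1 - x ^ 2 := by nlinarith [hx.1, hx.2]
      have hx2 : (0:ℝ) < x ^ 2 := by positivity
      have he : Real.exp (-t / x ^ 2) ≤ 1 := by
        apply Real.exp_le_one_iff.2
        rw [neg_div, neg_nonpos]
        positivity
      refine ⟨by positivity, ?_⟩
      nlinarith [Real.rpow_nonneg hb α, Real.exp_pos (-t / x ^ 2)]
  -- generic inner-point bound
  have hkey : ∀ x ∈ Ioo (-1:ℝ) 1,
      ((p.eval x) ^ 2 * w x / (1 - x ^ 2)) ≤ C₁ ^ 2 * ((1 - x) ^ (α - 1) * (1 + x) ^ (α - 1)) ∧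
      0 ≤ (p.eval x) ^ 2 * w x / (1 - x ^ 2) := by
    intro x hx
    obtain ⟨hx1, hx2⟩ := hx
    have hb : (0:ℝ) < 1 - x ^ 2 := by nlinarith
    have h1x : (0:ℝ) < 1 - x := by linarith
    have h1x' : (0:ℝ) < 1 + x := by linarith
    have hwx := hwle x ⟨hx1, hx2⟩
    have hfac : (1 - x ^ 2) ^ (α - 1) = (1 - x) ^ (α - 1) * (1 + x) ^ (α - 1) := by
      rw [← Real.mul_rpow h1x.le h1x'.le]
      congr 1
      ring
    have hple : (p.eval x) ^ 2 ≤ C₁ ^ 2 := by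
      have := hC₁ x ⟨hx1.le, hx2.le⟩
      rw [Real.norm_eq_abs] at this
      nlinarith [abs_nonneg (p.eval x), sq_abs (p.eval x)]
    have hrp : (1 - x ^ 2) ^ α / (1 - x ^ 2) = (1 - x ^ 2) ^ (α - 1) := by
      rw [Real.rpow_sub hb, Real.rpow_one]
    constructor
    · calc (p.eval x) ^ 2 * w x / (1 - x ^ 2) ≤ C₁ ^ 2 * (1 - x ^ 2) ^ α / (1 - x ^ 2) := by
            apply div_le_div₀ (by positivity) ?_ hb le_rfl
            nlinarith [hwx.1, hwx.2, sq_nonneg (p.eval x), Real.rpow_nonneg hb.le α]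
      _ = C₁ ^ 2 * ((1 - x ^ 2) ^ α / (1 - x ^ 2)) := by ring
      _ = C₁ ^ 2 * ((1 - x) ^ (α - 1) * (1 + x) ^ (α - 1)) := by rw [hrp, hfac]
    · have := hwx.1
      positivity
  have hmeas : ∀ a b : ℝ, AEStronglyMeasurable (fun x => (p.eval x) ^ 2 * w x / (1 - x ^ 2))
      (volume.restrict (Set.uIoc a b)) := by
    intro a b
    apply Measurable.aestronglyMeasurable
    exact (((Polynomial.continuous p).pow 2).mul wc).measurable.div
      (by fun_prop : Measurable fun x : ℝ => 1 - x ^ 2)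
  have hw1 : w 1 = 0 := by
    rw [hw 1 one_ne_zero]
    norm_num [Real.zero_rpow hα.ne']
  have hwm1 : w (-1) = 0 := by
    rw [hw (-1) (by norm_num)]
    norm_num [Real.zero_rpow hα.ne']
  -- right half
  have hright : IntervalIntegrable (fun x => (p.eval x) ^ 2 * w x / (1 - x ^ 2)) volume 0 1 := by
    have hg : IntervalIntegrable (fun x : ℝ => C * (1 - x) ^ (α - 1)) volume 0 1 := by
      have h0 : IntervalIntegrable (fun x : ℝ => x ^ (α - 1)) volume 0 1 :=
        intervalIntegrable_rpow' (by linarith)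
      have h1 := (h0.comp_sub_left 1).symm
      simpa using h1.const_mul C
    apply hg.mono_fun (hmeas 0 1)
    filter_upwards [ae_restrict_mem measurableSet_uIoc] with x hx
    rw [uIoc_of_le (by norm_num : (0:ℝ) ≤ 1)] at hx
    obtain ⟨hx0, hx1⟩ := hx
    rcases eq_or_lt_of_le hx1 with rfl | hx1'
    · have : (p.eval 1) ^ 2 * w 1 / (1 - 1 ^ 2) = 0 := by simp [hw1]
      rw [this]
      simp only [norm_zero, Real.norm_eq_abs]
      exact abs_nonneg _
    · have hxIoo : x ∈ Ioo (-1:ℝ) 1 := ⟨by linarith, hx1'⟩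
      obtain ⟨hub, hnn⟩ := hkey x hxIoo
      rw [Real.norm_eq_abs, Real.norm_eq_abs, abs_of_nonneg hnn]
      have h1px : (1 + x) ^ (α - 1) ≤ M := hMle _ (by linarith) (by linarith)
      have h1mx : (0:ℝ) ≤ (1 - x) ^ (α - 1) := Real.rpow_nonneg (by linarith) _
      calc (p.eval x) ^ 2 * w x / (1 - x ^ 2)
          ≤ C₁ ^ 2 * ((1 - x) ^ (α - 1) * (1 + x) ^ (α - 1)) := hub
        _ ≤ C₁ ^ 2 * ((1 - x) ^ (α - 1) * M) := mul_le_mul_of_nonneg_left (mul_le_mul_of_nonneg_left h1px h1mx) (sq_nonneg C₁)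
        _ = C * (1 - x) ^ (α - 1) := by rw [hC]; ring
        _ ≤ |C * (1 - x) ^ (α - 1)| := le_abs_self _
  -- left half
  have hleft : IntervalIntegrable (fun x => (p.eval x) ^ 2 * w x / (1 - x ^ 2)) volume (-1) 0 := by
    have hg : IntervalIntegrable (fun x : ℝ => C * (1 + x) ^ (α - 1)) volume (-1) 0 := by
      have h0 : IntervalIntegrable (fun x : ℝ => x ^ (α - 1)) volume 0 1 :=
        intervalIntegrable_rpow' (by linarith)
      have h1 := h0.comp_add_left 1
      simpa using h1.const_mul C
    apply hg.mono_fun (hmeas (-1) 0)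
    filter_upwards [ae_restrict_mem measurableSet_uIoc] with x hx
    rw [uIoc_of_le (by norm_num : (-1:ℝ) ≤ 0)] at hx
    obtain ⟨hx0, hx1⟩ := hx
    have hxIoo : x ∈ Ioo (-1:ℝ) 1 := ⟨hx0, by linarith⟩
    obtain ⟨hub, hnn⟩ := hkey x hxIoo
    rw [Real.norm_eq_abs, Real.norm_eq_abs, abs_of_nonneg hnn]
    have h1mx : (1 - x) ^ (α - 1) ≤ M := hMle _ (by linarith) (by linarith)
    have h1px : (0:ℝ) ≤ (1 + x) ^ (α - 1) := Real.rpow_nonneg (by linarith) _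
    calc (p.eval x) ^ 2 * w x / (1 - x ^ 2)
        ≤ C₁ ^ 2 * ((1 - x) ^ (α - 1) * (1 + x) ^ (α - 1)) := hub
      _ ≤ C₁ ^ 2 * (M * (1 + x) ^ (α - 1)) := mul_le_mul_of_nonneg_left (mul_le_mul_of_nonneg_right h1mx h1px) (sq_nonneg C₁)
      _ = C * (1 + x) ^ (α - 1) := by rw [hC]; ring
      _ ≤ |C * (1 + x) ^ (α - 1)| := le_abs_self _
  exact hleft.trans hright

private lemma orth_lower
    (wc : Continuous w) {P : ℕ → Polynomial ℝ} {h : ℕ → ℝ}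
    (hmonic : ∀ n, (P n).Monic) (hdeg : ∀ n, (P n).natDegree = n)
    (horth : ∀ j k, (∫ x in (-1:ℝ)..1, (P j).eval x * (P k).eval x * w x)
      = if j = k then h j else 0)
    (n : ℕ) :
    ∀ Q : Polynomial ℝ, Q.degree < (n : ℕ) →
      (∫ x in (-1:ℝ)..1, (P n).eval x * Q.eval x * w x) = 0 := by
  suffices key : ∀ m : ℕ, m ≤ n → ∀ Q : Polynomial ℝ, Q.degree < (m:ℕ) →
      (∫ x in (-1:ℝ)..1, (P n).eval x * Q.eval x * w x) = 0 from
    fun Q hQ => key n le_rfl Q hQ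
  intro m
  induction m with
  | zero =>
    intro _ Q hQ
    have hQ0 : Q = 0 := by
      rw [← Polynomial.degree_eq_bot]
      exact Nat.WithBot.lt_zero_iff.mp (by exact_mod_cast hQ)
    subst hQ0
    simp
  | succ m ih =>
    intro hmn Q hQ
    set c : ℝ := Q.coeff m with hc
    set Q' : Polynomial ℝ := Q - c • P m with hQ'
    have hdegPm : (P m).degree = (m : ℕ) :=
      (Polynomial.degree_eq_natDegree (hmonic m).ne_zero).trans (by rw [hdeg m])
    have hQle : Q.degree ≤ (m : ℕ) := by
      rcases eq_or_ne Q 0 with rfl | hQ0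
      · simp
      · have h1 : Q.natDegree < m + 1 := (Polynomial.natDegree_lt_iff_degree_lt hQ0).mpr
          (by exact_mod_cast hQ)
        calc Q.degree ≤ (Q.natDegree : WithBot ℕ) := Polynomial.degree_le_natDegree
        _ ≤ (m : ℕ) := by exact_mod_cast Nat.lt_succ_iff.mp h1
    have hQ'le : Q'.degree ≤ (m : ℕ) := by
      refine (Polynomial.degree_sub_le _ _).trans (max_le hQle ?_)
      exact (Polynomial.degree_smul_le _ _).trans (le_of_eq hdegPm)
    have hcoeff : Q'.coeff m = 0 := by
      simp only [hQ', Polynomial.coeff_sub, Polynomial.coeff_smul, smul_eq_mul]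
      have : (P m).coeff m = 1 := by
        have := (hmonic m).coeff_natDegree
        rwa [hdeg m] at this
      rw [this, ← hc]
      ring
    have hQ'deg : Q'.degree < (m : ℕ) := by
      rcases lt_or_eq_of_le hQ'le with hlt | heq
      · exact hlt
      · exfalso
        have hne : Q' ≠ 0 := fun h0 => by
          simp [h0] at heq
        have : Q'.leadingCoeff ≠ 0 := Polynomial.leadingCoeff_ne_zero.mpr hne
        apply this
        have hnat : Q'.natDegree = m := Polynomial.natDegree_eq_of_degree_eq_some heq
        rw [Polynomial.leadingCoeff, hnat]
        exact hcoeff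
    have hsplit : ∀ x : ℝ, (P n).eval x * Q.eval x * w x
        = c * ((P n).eval x * (P m).eval x * w x) + (P n).eval x * Q'.eval x * w x := by
      intro x
      have : Q.eval x = c * (P m).eval x + Q'.eval x := by
        simp only [hQ', Polynomial.eval_sub, Polynomial.eval_smul, smul_eq_mul]
        ring
      rw [this]
      ring
    rw [intervalIntegral.integral_congr (fun x _ => hsplit x)]
    have i1 : IntervalIntegrable (fun x => c * ((P n).eval x * (P m).eval x * w x)) volume (-1) 1 := by
      apply Continuous.intervalIntegrable
      fun_prop
    have i2 : IntervalIntegrable (fun x => (P n).eval x * Q'.eval x * w x) volume (-1) 1 := by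
      apply Continuous.intervalIntegrable
      fun_prop
    rw [intervalIntegral.integral_add i1 i2, intervalIntegral.integral_const_mul,
      horth n m, ih (by omega) Q' hQ'deg]
    have : n ≠ m := by omega
    simp [this]

end Aux

theorem stmt_3
    (α t : ℝ) (hα : 0 < α) (ht : 0 < t)
    (w : ℝ → ℝ)
    (hw : ∀ x : ℝ, x ≠ 0 → w x = (1 - x ^ 2) ^ α * Real.exp (-t / x ^ 2))
    (hw0 : w 0 = 0)
    (P : ℕ → Polynomial ℝ)
    (hmonic : ∀ n, (P n).Monic)
    (hdeg : ∀ n, (P n).natDegree = n)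
    (h : ℕ → ℝ)
    (hpos : ∀ n, 0 < h n)
    (horth : ∀ j k, (∫ x in (-1:ℝ)..1, (P j).eval x * (P k).eval x * w x)
      = if j = k then h j else 0)
    (R : ℕ → ℝ)
    (hR : ∀ n, R n = 2 * t / h n *
      ∫ y in (-1:ℝ)..1, ((P n).eval y) ^ 2 * w y / y ^ 2)
    :
    ∀ n : ℕ,
      (2 * α / h n) * (∫ y in (-1:ℝ)..1, ((P n).eval y) ^ 2 * w y / (1 - y ^ 2))
          = 2 * (n : ℝ) + 1 + 2 * α + R n ∧
      (2 * t / h n) * (∫ y in (-1:ℝ)..1, ((P n).eval y) ^ 2 * w y / y ^ 2)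
          = -(2 * (n : ℝ) + 1 + 2 * α)
            + (2 * α / h n) * (∫ y in (-1:ℝ)..1, ((P n).eval y) ^ 2 * w y / (1 - y ^ 2)) := by
  intro n
  have wc : Continuous w := w_cont hα ht hw hw0
  have wq : Continuous (fun x => w x / x ^ 2) := w_div_sq_cont hα ht hw hw0
  have hw1 : w 1 = 0 := by
    rw [hw 1 one_ne_zero]
    norm_num [Real.zero_rpow hα.ne']
  have hwm1 : w (-1) = 0 := by
    rw [hw (-1) (by norm_num)]
    norm_num [Real.zero_rpow hα.ne']
  have hhne : h n ≠ 0 := (hpos n).ne'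
  set p : Polynomial ℝ := P n with hp
  have hpc : Continuous fun x => Polynomial.eval x p := Polynomial.continuous p
  have hpc' : Continuous fun x => Polynomial.eval x (Polynomial.derivative p) :=
    Polynomial.continuous _
  -- the five summands
  set A1 : ℝ → ℝ := fun x => (p.eval x) ^ 2 * w x with hA1def
  set A2 : ℝ → ℝ := fun x => 2 * x * p.eval x * (p.derivative.eval x) * w x with hA2def
  set A3 : ℝ → ℝ := fun x => 2 * α * ((p.eval x) ^ 2 * w x) with hA3def
  set A4 : ℝ → ℝ := fun x => 2 * α * ((p.eval x) ^ 2 * w x / (1 - x ^ 2)) with hA4def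
  set A5 : ℝ → ℝ := fun x => 2 * t * ((p.eval x) ^ 2 * w x / x ^ 2) with hA5def
  -- integrability
  have i1 : IntervalIntegrable A1 volume (-1) 1 := by
    apply Continuous.intervalIntegrable
    exact (hpc.pow 2).mul wc
  have i2 : IntervalIntegrable A2 volume (-1) 1 := by
    apply Continuous.intervalIntegrable
    exact ((((continuous_const.mul continuous_id).mul hpc).mul hpc').mul wc)
  have i3 : IntervalIntegrable A3 volume (-1) 1 := by
    apply Continuous.intervalIntegrable
    exact continuous_const.mul ((hpc.pow 2).mul wc)
  have i4 : IntervalIntegrable A4 volume (-1) 1 :=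
    (w_edge_integrable hα ht hw hw0 wc p).const_mul _
  have c5 : Continuous fun x => (p.eval x) ^ 2 * w x / x ^ 2 := by
    have heq : (fun x => (p.eval x) ^ 2 * w x / x ^ 2)
        = fun x => (p.eval x) ^ 2 * (w x / x ^ 2) := by
      funext x
      rw [mul_div_assoc]
    rw [heq]
    exact (hpc.pow 2).mul wq
  have i5 : IntervalIntegrable A5 volume (-1) 1 := by
    apply Continuous.intervalIntegrable
    exact continuous_const.mul c5
  -- the function F and its derivative
  set F : ℝ → ℝ := fun x => x * (p.eval x) ^ 2 * w x with hFdef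
  set G : ℝ → ℝ := fun x => A1 x + A2 x + A3 x - A4 x + A5 x with hGdef
  have iG : IntervalIntegrable G volume (-1) 1 := (((i1.add i2).add i3).sub i4).add i5
  have hu : ∀ x : ℝ, HasDerivAt (fun y => y * (p.eval y) ^ 2)
      ((p.eval x) ^ 2 + x * (2 * p.eval x * p.derivative.eval x)) x := by
    intro x
    have h1 : HasDerivAt (fun y : ℝ => y) 1 x := hasDerivAt_id x
    have h2 : HasDerivAt (fun y => (p.eval y) ^ 2)
        (2 * p.eval x * p.derivative.eval x) x := by
      exact ((p.hasDerivAt x).pow 2).congr_deriv (by simp)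
    have := h1.mul h2
    refine this.congr_deriv ?_
    ring
  have hF : ∀ x ∈ Ioo (-1:ℝ) 1, HasDerivAt F (G x) x := by
    intro x hx
    rcases eq_or_ne x 0 with rfl | hx0
    · have hD := (hu 0).mul (w_deriv_zero hα ht hw hw0)
      have hFu : F = fun y => (fun z => z * (p.eval z) ^ 2) y * w y := by
        funext y
        simp only [hFdef]
      rw [hFu]
      refine hD.congr_deriv ?_
      simp [hGdef, hA1def, hA2def, hA3def, hA4def, hA5def, hw0]
    · have hD := (hu x).mul (w_deriv hα ht hw hx0 hx)
      have hFu : F = fun y => (fun z => z * (p.eval z) ^ 2) y * w y := by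
        funext y
        simp only [hFdef]
      rw [hFu]
      refine hD.congr_deriv ?_
      have hb : (1:ℝ) - x ^ 2 ≠ 0 := by
        have h1 := hx.1
        have h2 := hx.2
        intro hcon
        nlinarith
      simp only [hGdef, hA1def, hA2def, hA3def, hA4def, hA5def]
      field_simp
      ring
  -- Fundamental theorem of calculus
  have hzero : (∫ x in (-1:ℝ)..1, G x) = 0 := by
    rw [integral_eq_sub_of_hasDeriv_right_of_le (by norm_num)
      (((continuous_id.mul (hpc.pow 2)).mul wc).continuousOn)
      (fun x hx => (hF x hx).hasDerivWithinAt) iG]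
    simp [hFdef, hw1, hwm1]
  have hsplit : (∫ x in (-1:ℝ)..1, G x)
      = (∫ x in (-1:ℝ)..1, A1 x) + (∫ x in (-1:ℝ)..1, A2 x) + (∫ x in (-1:ℝ)..1, A3 x)
        - (∫ x in (-1:ℝ)..1, A4 x) + (∫ x in (-1:ℝ)..1, A5 x) := by
    rw [hGdef]
    rw [intervalIntegral.integral_add ((((i1.add i2).add i3)).sub i4) i5,
      intervalIntegral.integral_sub ((i1.add i2).add i3) i4,
      intervalIntegral.integral_add (i1.add i2) i3,
      intervalIntegral.integral_add i1 i2]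
  -- values of the integrals
  have hInt1 : (∫ x in (-1:ℝ)..1, A1 x) = h n := by
    have ho := horth n n
    rw [if_pos rfl] at ho
    rw [← ho]
    apply intervalIntegral.integral_congr
    intro x _
    simp only [hA1def, ← hp]
    ring
  have hInt3 : (∫ x in (-1:ℝ)..1, A3 x) = 2 * α * h n := by
    rw [hA3def, intervalIntegral.integral_const_mul]
    have : (∫ x in (-1:ℝ)..1, (p.eval x) ^ 2 * w x) = h n := by
      rw [← hInt1]
    rw [this]
  -- the orthogonality computation for A2
  have hInt2 : (∫ x in (-1:ℝ)..1, A2 x) = 2 * n * h n := by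
    have horthlow := orth_lower wc hmonic hdeg horth n
    have hxp' : (∫ x in (-1:ℝ)..1, p.eval x * (x * p.derivative.eval x) * w x)
        = (n : ℝ) * h n := by
      rcases n with _ | m
      · -- n = 0 : p is a constant
        have hp0 : p = Polynomial.C (p.coeff 0) := Polynomial.eq_C_of_natDegree_eq_zero (hdeg 0)
        have : ∀ x ∈ Set.uIcc (-1:ℝ) 1,
            p.eval x * (x * p.derivative.eval x) * w x = 0 := by
          intro x _
          rw [hp0]
          simp
        rw [intervalIntegral.integral_congr this]
        simp
      · set q : Polynomial ℝ := Polynomial.X * Polynomial.derivative p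
            - ((m + 1 : ℕ) : ℝ) • p with hq
        have hdegp : p.natDegree = m + 1 := hdeg (m + 1)
        have hdegreep : p.degree = ((m + 1 : ℕ) : WithBot ℕ) :=
          (Polynomial.degree_eq_natDegree (hmonic (m+1)).ne_zero).trans (by rw [hdegp])
        have hqle : q.degree ≤ ((m + 1 : ℕ) : WithBot ℕ) := by
          apply (Polynomial.degree_sub_le _ _).trans
          apply max_le
          · have hnd : (Polynomial.X * Polynomial.derivative p).natDegree ≤ m + 1 := by
              apply Polynomial.natDegree_mul_le.trans
              have h1 : (Polynomial.derivative p).natDegree ≤ m :=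
                (Polynomial.natDegree_derivative_le p).trans (by omega)
              simp [Polynomial.natDegree_X]
              omega
            exact Polynomial.degree_le_natDegree.trans (by exact_mod_cast hnd)
          · exact (Polynomial.degree_smul_le _ _).trans (le_of_eq hdegreep)
        have hqcoeff : q.coeff (m + 1) = 0 := by
          rw [hq, Polynomial.coeff_sub, Polynomial.coeff_smul]
          have h1 : (Polynomial.X * Polynomial.derivative p).coeff (m + 1)
              = (Polynomial.derivative p).coeff m := Polynomial.coeff_X_mul _ _
          have h2 : (Polynomial.derivative p).coeff m = p.coeff (m + 1) * (m + 1) :=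
            Polynomial.coeff_derivative _ _
          have h3 : p.coeff (m + 1) = 1 := by
            have := (hmonic (m + 1)).coeff_natDegree
            rwa [hdegp] at this
          rw [h1, h2, h3]
          simp [smul_eq_mul]
        have hqdeg : q.degree < ((m + 1 : ℕ) : WithBot ℕ) :=
          degree_lt_of_coeff_zero q (m + 1) hqle hqcoeff
        have h0 := horthlow q hqdeg
        have hsplit2 : ∀ x ∈ Set.uIcc (-1:ℝ) 1,
            p.eval x * (x * p.derivative.eval x) * w x
            = (P (m + 1)).eval x * q.eval x * w x
              + ((m + 1 : ℕ) : ℝ) * (p.eval x * p.eval x * w x) := by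
          intro x _
          have : q.eval x = x * p.derivative.eval x - ((m + 1 : ℕ) : ℝ) * p.eval x := by
            simp [hq]
          rw [this, ← hp]
          ring
        rw [intervalIntegral.integral_congr hsplit2]
        have j1 : IntervalIntegrable (fun x => (P (m+1)).eval x * q.eval x * w x)
            volume (-1) 1 := by
          apply Continuous.intervalIntegrable
          exact ((Polynomial.continuous _).mul (Polynomial.continuous _)).mul wc
        have j2 : IntervalIntegrable
            (fun x => ((m + 1 : ℕ) : ℝ) * (p.eval x * p.eval x * w x)) volume (-1) 1 := by
          apply Continuous.intervalIntegrable
          exact continuous_const.mul ((hpc.mul hpc).mul wc)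
        rw [intervalIntegral.integral_add j1 j2, h0,
          intervalIntegral.integral_const_mul]
        have ho := horth (m + 1) (m + 1)
        rw [if_pos rfl] at ho
        rw [← hp] at ho
        rw [ho]
        ring
    have : ∀ x ∈ Set.uIcc (-1:ℝ) 1,
        A2 x = 2 * (p.eval x * (x * p.derivative.eval x) * w x) := by
      intro x _
      simp only [hA2def]
      ring
    rw [intervalIntegral.integral_congr this, intervalIntegral.integral_const_mul, hxp']
    ring
  have hInt4 : (∫ x in (-1:ℝ)..1, A4 x)
      = 2 * α * (∫ y in (-1:ℝ)..1, ((P n).eval y) ^ 2 * w y / (1 - y ^ 2)) := by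
    rw [hA4def, intervalIntegral.integral_const_mul, ← hp]
  have hInt5 : (∫ x in (-1:ℝ)..1, A5 x)
      = 2 * t * (∫ y in (-1:ℝ)..1, ((P n).eval y) ^ 2 * w y / y ^ 2) := by
    rw [hA5def, intervalIntegral.integral_const_mul, ← hp]
  set J1 : ℝ := ∫ y in (-1:ℝ)..1, ((P n).eval y) ^ 2 * w y / (1 - y ^ 2) with hJ1
  set J2 : ℝ := ∫ y in (-1:ℝ)..1, ((P n).eval y) ^ 2 * w y / y ^ 2 with hJ2
  have key : h n + 2 * n * h n + 2 * α * h n - 2 * α * J1 + 2 * t * J2 = 0 := by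
    rw [hsplit, hInt1, hInt2, hInt3, hInt4, hInt5] at hzero
    linarith
  have hRn : R n = 2 * t / h n * J2 := hR n
  constructor
  · rw [hRn]
    field_simp
    linarith
  · field_simp
    linarith
end

section
/- For every n ≥ 0, R_n(t) = r_{n+1}(t) + r_n(t), where r_0(t) := 0. -/
open MeasureTheory Polynomial

noncomputable def Jf (w : ℝ → ℝ) (p : Polynomial ℝ) : ℝ :=
  ∫ y in (-1:ℝ)..1, p.eval y * w y / y ^ 3

section Aux

variable {α t : ℝ} {w : ℝ → ℝ}

private lemma cube_le_exp {x : ℝ} (hx : 0 ≤ x) : x ^ 3 / 6 ≤ Real.exp x := by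
  have h := Real.sum_le_exp_of_nonneg hx 4
  simp [Finset.sum_range_succ, Nat.factorial] at h
  nlinarith [sq_nonneg x, hx]

private lemma w_le (hα : 0 < α) (ht : 0 < t)
    (hw : ∀ x : ℝ, x ≠ 0 → w x = (1 - x ^ 2) ^ α * Real.exp (-t / x ^ 2))
    (hw0 : w 0 = 0) {y : ℝ} (hy : y ∈ Set.Ioc (-1:ℝ) 1) :
    |w y / y ^ 3| ≤ 6 / t ^ 3 := by
  rcases eq_or_ne y 0 with rfl | hy0
  · simp [hw0]
    positivity
  · obtain ⟨hy1, hy2⟩ := hy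
    have hy2' : y ^ 2 ≤ 1 := by nlinarith
    have h2 : (0:ℝ) < y ^ 2 := by positivity
    have ha : (0:ℝ) < |y| := abs_pos.2 hy0
    have ha1 : |y| ≤ 1 := abs_le.2 ⟨by linarith, hy2⟩
    have hx : 0 < t / y ^ 2 := by positivity
    have hE := Real.exp_pos (t / y ^ 2)
    have h1 : (t / y ^ 2) ^ 3 / 6 ≤ Real.exp (t / y ^ 2) := cube_le_exp hx.le
    rw [div_pow, div_div, div_le_iff₀ (by positivity)] at h1
    have hr1 : (1 - y ^ 2) ^ α ≤ 1 := Real.rpow_le_one (by nlinarith) (by nlinarith) hα.le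
    have hwE : w y ≤ Real.exp (-t / y ^ 2) := by
      rw [hw y hy0]
      nlinarith [Real.exp_pos (-t / y ^ 2),
        Real.rpow_nonneg (show (0:ℝ) ≤ 1 - y ^ 2 by nlinarith) α]
    have hw0' : 0 ≤ w y := by
      rw [hw y hy0]
      exact mul_nonneg (Real.rpow_nonneg (by nlinarith) _) (Real.exp_pos _).le
    have hexp : Real.exp (-t / y ^ 2) * t ^ 3 ≤ 6 * |y| ^ 6 := by
      have hen : Real.exp (-t / y ^ 2) = (Real.exp (t / y ^ 2))⁻¹ := by
        rw [neg_div, Real.exp_neg]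
      have h6 : |y| ^ 6 = (y ^ 2) ^ 3 := by
        rw [← abs_pow]
        rw [abs_of_nonneg (show (0:ℝ) ≤ y ^ 6 by positivity)]
        ring
      rw [hen, h6, inv_mul_le_iff₀ hE]
      nlinarith [h1]
    have hcube : |y| ^ 3 ≤ 1 := pow_le_one₀ (abs_nonneg y) ha1
    have habs : |w y / y ^ 3| = w y / |y| ^ 3 := by
      rw [abs_div, abs_of_nonneg hw0', abs_pow]
    rw [habs, div_le_div_iff₀ (by positivity) (by positivity)]
    calc w y * t ^ 3 ≤ Real.exp (-t / y ^ 2) * t ^ 3 :=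
          mul_le_mul_of_nonneg_right hwE (by positivity)
      _ ≤ 6 * |y| ^ 6 := hexp
      _ = 6 * |y| ^ 3 * |y| ^ 3 := by ring
      _ ≤ 6 * |y| ^ 3 * 1 := by nlinarith [pow_nonneg (abs_nonneg y) 3, hcube]
      _ = 6 * |y| ^ 3 := mul_one _

lemma integrable_aux (hα : 0 < α) (ht : 0 < t)
    (hw : ∀ x : ℝ, x ≠ 0 → w x = (1 - x ^ 2) ^ α * Real.exp (-t / x ^ 2))
    (hw0 : w 0 = 0) (q : Polynomial ℝ) :
    IntervalIntegrable (fun y => q.eval y * w y / y ^ 3) volume (-1) 1 := by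
  rw [intervalIntegrable_iff]
  have hsub : Set.uIoc (-1:ℝ) 1 = Set.Ioc (-1:ℝ) 1 := Set.uIoc_of_le (by norm_num)
  rw [hsub]
  obtain ⟨C, hC⟩ : ∃ C, ∀ x ∈ Set.Icc (-1:ℝ) 1, |q.eval x| ≤ C := by
    obtain ⟨C, hC⟩ := isCompact_Icc.exists_bound_of_continuousOn
      (continuous_abs.comp q.continuous).continuousOn
    exact ⟨C, fun x hx => by simpa using hC x hx⟩
  have hC0 : 0 ≤ C := le_trans (abs_nonneg _) (hC 0 (by norm_num))
  set g : ℝ → ℝ := fun y =>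
    q.eval y * ((1 - y ^ 2) ^ α * Real.exp (-t / y ^ 2)) / y ^ 3 with hg
  have hgm : Measurable g := by
    apply Measurable.div
    · apply Measurable.mul q.continuous.measurable
      apply Measurable.mul
      · exact ((continuous_const.sub (continuous_pow 2)).rpow_const
          (fun x => Or.inr hα.le)).measurable
      · exact (Real.continuous_exp.measurable).comp
          (measurable_const.div ((measurable_id.pow_const 2)))
    · exact measurable_id.pow_const 3
  have h0 : ∀ᵐ (y : ℝ) ∂(volume.restrict (Set.Ioc (-1:ℝ) 1)), y ≠ 0 := by
    apply ae_restrict_of_ae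
    rw [MeasureTheory.ae_iff]
    have : {a : ℝ | ¬a ≠ 0} = {(0:ℝ)} := by ext x; simp
    rw [this]
    exact measure_singleton 0
  have hmeas : AEStronglyMeasurable (fun y => q.eval y * w y / y ^ 3)
      (volume.restrict (Set.Ioc (-1:ℝ) 1)) := by
    refine hgm.aestronglyMeasurable.congr ?_
    filter_upwards [h0] with y hy
    rw [hg]
    simp only
    rw [← hw y hy]
  refine Integrable.mono' (g := fun _ => C * (6 / t ^ 3))
    (integrableOn_const measure_Ioc_lt_top.ne) hmeas ?_
  filter_upwards [ae_restrict_mem measurableSet_Ioc] with y hy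
  have h1 := w_le hα ht hw hw0 hy
  have h2 : |q.eval y| ≤ C := hC y ⟨hy.1.le, hy.2⟩
  calc ‖q.eval y * w y / y ^ 3‖ = |q.eval y| * |w y / y ^ 3| := by
        rw [Real.norm_eq_abs, mul_div_assoc, abs_mul]
    _ ≤ C * (6 / t ^ 3) := mul_le_mul h2 h1 (abs_nonneg _) hC0

variable (w)

lemma Jf_zero : Jf w 0 = 0 := by simp [Jf]

variable
    (hint : ∀ p : Polynomial ℝ,
      IntervalIntegrable (fun y => p.eval y * w y / y ^ 3) volume (-1) 1)

include hint in
lemma Jf_add (p q : Polynomial ℝ) : Jf w (p + q) = Jf w p + Jf w q := by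
  have hfun : (fun y => (p + q).eval y * w y / y ^ 3)
      = fun y => p.eval y * w y / y ^ 3 + q.eval y * w y / y ^ 3 := by
    funext y
    rw [eval_add]
    ring
  rw [Jf, hfun, intervalIntegral.integral_add (hint p) (hint q)]
  rfl

lemma Jf_smul (c : ℝ) (p : Polynomial ℝ) : Jf w (c • p) = c * Jf w p := by
  rw [Jf, Jf, ← intervalIntegral.integral_const_mul]
  congr 1
  funext y
  rw [eval_smul, smul_eq_mul]
  ring

include hint in
lemma Jf_sub (p q : Polynomial ℝ) : Jf w (p - q) = Jf w p - Jf w q := by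
  have : p - q = p + (-1 : ℝ) • q := by
    rw [neg_one_smul]; ring
  rw [this, Jf_add w hint, Jf_smul]
  ring

include hint in
lemma Jf_sum {ι : Type*} (s : Finset ι) (f : ι → Polynomial ℝ) :
    Jf w (∑ i ∈ s, f i) = ∑ i ∈ s, Jf w (f i) := by
  classical
  induction s using Finset.induction_on with
  | empty => simp [Jf]
  | insert _ _ hnot ih =>
      rw [Finset.sum_insert hnot, Finset.sum_insert hnot, Jf_add w hint, ih]

lemma Jf_cube (hw0 : w 0 = 0) (p q : Polynomial ℝ) :
    Jf w (X ^ 3 * (p * q)) = ∫ y in (-1:ℝ)..1, p.eval y * q.eval y * w y := by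
  rw [Jf]
  congr 1
  funext y
  rcases eq_or_ne y 0 with rfl | hy
  · simp [hw0]
  · rw [eval_mul, eval_pow, eval_X, eval_mul]
    field_simp

variable (P : ℕ → Polynomial ℝ) (h : ℕ → ℝ)

lemma exists_rep (hmonic : ∀ n, (P n).Monic) (hdeg : ∀ n, (P n).natDegree = n) :
    ∀ (d n : ℕ) (q : Polynomial ℝ), q.natDegree ≤ d → q.degree < (n : ℕ) →
      q ∈ Submodule.span ℝ (Set.range fun k : Fin n => P k) := by
  intro d
  induction d with
  | zero =>
    intro n q hq hlt
    rcases eq_or_ne q 0 with rfl | hq0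
    · exact Submodule.zero_mem _
    · have hn : 0 < n := by
        have hdq : q.degree = ((0 : ℕ) : WithBot ℕ) := by
          rw [Polynomial.degree_eq_natDegree hq0, Nat.le_zero.1 hq]
        rw [hdq] at hlt
        exact_mod_cast hlt
      have hq1 : q = Polynomial.C (q.coeff 0) := Polynomial.eq_C_of_natDegree_le_zero hq
      have hP0 : P 0 = 1 := ((hmonic 0).natDegree_eq_zero).1 (hdeg 0)
      have hq2 : q = q.coeff 0 • P 0 := by
        rw [hP0, smul_eq_C_mul, mul_one, ← hq1]
      rw [hq2]
      exact Submodule.smul_mem _ _ (Submodule.subset_span ⟨⟨0, hn⟩, rfl⟩)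
  | succ d ih =>
    intro n q hq hlt
    rcases eq_or_ne q 0 with rfl | hq0
    · exact Submodule.zero_mem _
    rcases Nat.lt_or_ge q.natDegree (d + 1) with hlt' | hge
    · exact ih n q (by omega) hlt
    have hdq : q.natDegree = d + 1 := le_antisymm hq hge
    have hqd : q.degree = ((d + 1 : ℕ) : WithBot ℕ) := by
      rw [Polynomial.degree_eq_natDegree hq0, hdq]
    have hn : d + 1 < n := by
      rw [hqd] at hlt
      exact_mod_cast hlt
    set p := Polynomial.C q.leadingCoeff * P (d + 1) with hp
    have hlc : q.leadingCoeff ≠ 0 := Polynomial.leadingCoeff_ne_zero.2 hq0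
    have hPdeg : (P (d + 1)).degree = ((d + 1 : ℕ) : WithBot ℕ) := by
      rw [Polynomial.degree_eq_natDegree (hmonic (d + 1)).ne_zero, hdeg]
    have hpd : p.degree = q.degree := by
      rw [hp, Polynomial.degree_C_mul hlc, hPdeg, hqd]
    have hplc : p.leadingCoeff = q.leadingCoeff := by
      rw [hp, Polynomial.leadingCoeff_mul, Polynomial.leadingCoeff_C,
        (hmonic (d + 1)).leadingCoeff, mul_one]
    have hsub : (q - p).degree < q.degree :=
      Polynomial.degree_sub_lt hpd.symm hq0 hplc.symm
    have h1 : (q - p).natDegree ≤ d := by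
      rcases eq_or_ne (q - p) 0 with h0 | h0
      · simp [h0]
      · have := Polynomial.natDegree_lt_natDegree h0 hsub
        omega
    have h2 : (q - p).degree < (n : ℕ) := hsub.trans hlt
    have hm := ih n (q - p) h1 h2
    have hq3 : q = (q - p) + q.leadingCoeff • P (d + 1) := by
      rw [smul_eq_C_mul, ← hp]
      ring
    rw [hq3]
    exact Submodule.add_mem _ hm
      (Submodule.smul_mem _ _ (Submodule.subset_span ⟨⟨d + 1, hn⟩, rfl⟩))

lemma exists_rep' (hmonic : ∀ n, (P n).Monic) (hdeg : ∀ n, (P n).natDegree = n)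
    (n : ℕ) (q : Polynomial ℝ) (hq : q.degree < (n : ℕ)) :
    ∃ c : Fin n → ℝ, q = ∑ i, c i • P i := by
  have hmem := exists_rep P hmonic hdeg q.natDegree n q le_rfl hq
  obtain ⟨c, hc⟩ := (Submodule.mem_span_range_iff_exists_fun ℝ).1 hmem
  exact ⟨c, hc.symm⟩

variable
    (horthJ : ∀ j k, Jf w (X ^ 3 * (P j * P k)) = if j = k then h j else 0)

include hint horthJ in
lemma Jf_orth (hmonic : ∀ n, (P n).Monic) (hdeg : ∀ n, (P n).natDegree = n)
    (k : ℕ) (q : Polynomial ℝ) (hq : q.degree < (k : ℕ)) :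
    Jf w (X ^ 3 * (P k * q)) = 0 := by
  obtain ⟨c, hc⟩ := exists_rep' P hmonic hdeg k q hq
  have hXq : X ^ 3 * (P k * q) = ∑ i : Fin k, c i • (X ^ 3 * (P k * P i)) := by
    rw [hc, Finset.mul_sum, Finset.mul_sum]
    exact Finset.sum_congr rfl fun i _ => by rw [mul_smul_comm, mul_smul_comm]
  rw [hXq, Jf_sum w hint]
  apply Finset.sum_eq_zero
  intro i _
  rw [Jf_smul, horthJ]
  rw [if_neg (by exact fun hh => absurd hh.symm (Nat.ne_of_lt i.2)), mul_zero]

include hint horthJ in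
lemma eq_zero_of_orth (hmonic : ∀ n, (P n).Monic) (hdeg : ∀ n, (P n).natDegree = n)
    (hpos : ∀ n, 0 < h n)
    (m : ℕ) (q : Polynomial ℝ) (hq : q.degree < (m : ℕ))
    (hortho : ∀ i, i < m → Jf w (X ^ 3 * (q * P i)) = 0) : q = 0 := by
  obtain ⟨c, hc⟩ := exists_rep' P hmonic hdeg m q hq
  have hz : ∀ i : Fin m, c i = 0 := by
    intro i
    have h1 : X ^ 3 * (q * P (i : ℕ)) = ∑ k : Fin m, c k • (X ^ 3 * (P k * P (i : ℕ))) := by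
      rw [hc, Finset.sum_mul, Finset.mul_sum]
      exact Finset.sum_congr rfl fun k _ => by
        rw [smul_mul_assoc, mul_smul_comm]
    have h2 := hortho i i.2
    rw [h1, Jf_sum w hint] at h2
    have h3 : ∀ k : Fin m, Jf w (c k • (X ^ 3 * (P k * P (i : ℕ))))
        = if k = i then c k * h k else 0 := by
      intro k
      rw [Jf_smul, horthJ]
      rcases eq_or_ne k i with rfl | hne
      · simp
      · rw [if_neg (fun hh => hne (Fin.ext hh)), if_neg hne, mul_zero]
    rw [Finset.sum_congr rfl fun k _ => h3 k, Finset.sum_ite_eq' Finset.univ i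
      (fun k => c k * h k), if_pos (Finset.mem_univ i)] at h2
    rcases mul_eq_zero.1 h2 with h4 | h4
    · exact h4
    · exact absurd h4 (hpos i).ne'
  rw [hc]
  apply Finset.sum_eq_zero
  intro i _
  rw [hz i, zero_smul]


include hint in
lemma Jf_Cmul (c : ℝ) (p : Polynomial ℝ) : Jf w (C c * p) = c * Jf w p := by
  rw [← smul_eq_C_mul, Jf_smul]

lemma Jf_odd (wsym : ∀ x, w (-x) = w x) (p : Polynomial ℝ)
    (hp : p.comp (-X) = p) : Jf w p = 0 := by
  have key : (fun y => p.eval y * w y / y ^ 3)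
      = fun y => -((fun z => p.eval z * w z / z ^ 3) (-y)) := by
    funext y
    have h1 : p.eval (-y) = p.eval y := by
      have h2 := congrArg (eval y) hp
      rwa [eval_comp, eval_neg, eval_X] at h2
    simp only
    rw [wsym, h1, Odd.neg_pow (by decide : Odd 3), div_neg, neg_neg]
  have h2 : Jf w p = -(Jf w p) := by
    conv_lhs => rw [Jf, key]
    rw [intervalIntegral.integral_neg,
      intervalIntegral.integral_comp_neg (fun z => p.eval z * w z / z ^ 3)]
    simp only [neg_neg]
    rw [Jf]
  linarith

include hint horthJ in
lemma parity (hw0 : w 0 = 0) (wsym : ∀ x, w (-x) = w x)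
    (hmonic : ∀ n, (P n).Monic) (hdeg : ∀ n, (P n).natDegree = n)
    (hpos : ∀ n, 0 < h n) :
    ∀ n : ℕ, (P n).comp (-X) = C ((-1:ℝ) ^ n) * P n := by
  intro n
  induction n using Nat.strong_induction_on with
  | _ n ih =>
    have hplus : ((-1:ℝ) ^ n) * (-1) ^ n = 1 := by
      rw [← mul_pow]; norm_num
    have hne : ((-1:ℝ) ^ n) ≠ 0 := by
      intro hzero
      rw [hzero, mul_zero] at hplus
      norm_num at hplus
    have hcompdeg : ((P n).comp (-X)).natDegree = n := by
      rw [natDegree_comp]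
      simp [hdeg]
    have hcomplc : ((P n).comp (-X)).leadingCoeff = (-1:ℝ) ^ n := by
      rw [leadingCoeff_comp (by simp)]
      simp [(hmonic n).leadingCoeff, hdeg]
    have hcompne : (P n).comp (-X) ≠ 0 := by
      intro h0
      rw [h0, leadingCoeff_zero] at hcomplc
      exact hne hcomplc.symm
    set Q : Polynomial ℝ := C ((-1:ℝ) ^ n) * (P n).comp (-X) with hQdef
    have hQdeg : Q.degree = (P n).degree := by
      rw [hQdef, degree_C_mul hne, degree_eq_natDegree hcompne,
        degree_eq_natDegree (hmonic n).ne_zero, hcompdeg, hdeg]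
    have hQlc : Q.leadingCoeff = (P n).leadingCoeff := by
      rw [hQdef, leadingCoeff_mul, leadingCoeff_C, hcomplc, hplus,
        (hmonic n).leadingCoeff]
    have hsub : (P n - Q).degree < ((n : ℕ) : WithBot ℕ) := by
      have := Polynomial.degree_sub_lt hQdeg.symm (hmonic n).ne_zero hQlc.symm
      rwa [degree_eq_natDegree (hmonic n).ne_zero, hdeg] at this
    have hD : P n - Q = 0 := by
      apply eq_zero_of_orth w hint P h horthJ hmonic hdeg hpos n _ hsub
      intro i hi
      have hsplit : X ^ 3 * ((P n - Q) * P i)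
          = X ^ 3 * (P n * P i) - X ^ 3 * (Q * P i) := by ring
      rw [hsplit, Jf_sub w hint, horthJ, if_neg (Nat.ne_of_gt hi)]
      have hQint : Jf w (X ^ 3 * (Q * P i)) = 0 := by
        rw [Jf_cube w hw0]
        have hPi : P i = C ((-1:ℝ) ^ i) * (P i).comp (-X) := by
          have h2 := congrArg (fun q => C ((-1:ℝ) ^ i) * q) (ih i hi)
          rw [h2, ← mul_assoc, ← C_mul, ← mul_pow]
          norm_num
        have hfun : (fun y => Q.eval y * (P i).eval y * w y)
            = fun y => ((-1:ℝ) ^ (n + i)) *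
              ((fun z => (P n).eval z * (P i).eval z * w z) (-y)) := by
          funext y
          have e1 : Q.eval y = (-1:ℝ) ^ n * (P n).eval (-y) := by
            rw [hQdef, eval_mul, eval_C, eval_comp, eval_neg, eval_X]
          have e2 : (P i).eval y = (-1:ℝ) ^ i * (P i).eval (-y) := by
            conv_lhs => rw [hPi]
            rw [eval_mul, eval_C, eval_comp, eval_neg, eval_X]
          simp only
          rw [e1, e2, ← wsym y, pow_add]
          ring
        rw [hfun, intervalIntegral.integral_const_mul,
          intervalIntegral.integral_comp_neg
            (fun z => (P n).eval z * (P i).eval z * w z)]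
        simp only [neg_neg]
        rw [← Jf_cube w hw0, horthJ, if_neg (Nat.ne_of_gt hi), mul_zero]
      rw [hQint, sub_zero]
    have hPQ : P n = Q := sub_eq_zero.1 hD
    have hfin : C ((-1:ℝ) ^ n) * P n = C ((-1:ℝ) ^ n) * Q := congrArg _ hPQ
    rw [hQdef, ← mul_assoc, ← C_mul, hplus, C_1, one_mul] at hfin
    exact hfin.symm

include hint horthJ in
lemma recur0 (hw0 : w 0 = 0)
    (hmonic : ∀ n, (P n).Monic) (hdeg : ∀ n, (P n).natDegree = n)
    (hpos : ∀ n, 0 < h n) :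
    ∃ a : ℝ, X * P 0 = P 1 + C a * P 0 := by
  set a : ℝ := Jf w (X ^ 3 * ((X * P 0) * P 0)) / h 0 with ha
  refine ⟨a, ?_⟩
  have hCle : ∀ (c : ℝ) (k : ℕ), (C c * P k).degree ≤ ((k : ℕ) : WithBot ℕ) := by
    intro c k
    rcases eq_or_ne c 0 with rfl | hc
    · simp
    · rw [degree_C_mul hc, degree_eq_natDegree (hmonic k).ne_zero, hdeg]
  have hXP : (X * P 0).Monic := monic_X.mul (hmonic 0)
  have hXPdeg : (X * P 0).natDegree = 1 := by
    rw [monic_X.natDegree_mul (hmonic 0), natDegree_X, hdeg]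
  set q : Polynomial ℝ := X * P 0 - P 1 - C a * P 0 with hqdef
  have hd1 : (X * P 0 - P 1).degree < ((1 : ℕ) : WithBot ℕ) := by
    have h1 : (X * P 0).degree = (P 1).degree := by
      rw [degree_eq_natDegree hXP.ne_zero, degree_eq_natDegree (hmonic 1).ne_zero,
        hXPdeg, hdeg]
    have h2 := Polynomial.degree_sub_lt h1 hXP.ne_zero
      (by rw [hXP.leadingCoeff, (hmonic 1).leadingCoeff])
    rwa [degree_eq_natDegree hXP.ne_zero, hXPdeg] at h2
  have hqdeg : q.degree < ((1 : ℕ) : WithBot ℕ) := by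
    rw [hqdef]
    refine lt_of_le_of_lt (degree_sub_le _ _) (max_lt hd1 ?_)
    refine lt_of_le_of_lt (hCle a 0) ?_
    exact_mod_cast Nat.zero_lt_one
  have hq0 : q = 0 := by
    apply eq_zero_of_orth w hint P h horthJ hmonic hdeg hpos 1 q hqdeg
    intro i hi
    interval_cases i
    have hsplit : X ^ 3 * (q * P 0)
        = X ^ 3 * ((X * P 0) * P 0) - X ^ 3 * (P 1 * P 0)
          - C a * (X ^ 3 * (P 0 * P 0)) := by
      rw [hqdef]; ring
    rw [hsplit, Jf_sub w hint, Jf_sub w hint, Jf_Cmul w hint, horthJ, horthJ]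
    rw [if_neg (by norm_num), if_pos rfl, ha]
    field_simp [(hpos 0).ne']
    ring
  rw [hqdef] at hq0
  linear_combination hq0

include hint horthJ in
lemma recur1 (hw0 : w 0 = 0)
    (hmonic : ∀ n, (P n).Monic) (hdeg : ∀ n, (P n).natDegree = n)
    (hpos : ∀ n, 0 < h n) (n : ℕ) (hn : 1 ≤ n) :
    ∃ a : ℝ, X * P n = P (n + 1) + C a * P n + C (h n / h (n - 1)) * P (n - 1) := by
  set a : ℝ := Jf w (X ^ 3 * ((X * P n) * P n)) / h n with ha
  set b : ℝ := h n / h (n - 1) with hb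
  refine ⟨a, ?_⟩
  have hCle : ∀ (c : ℝ) (k : ℕ), (C c * P k).degree ≤ ((k : ℕ) : WithBot ℕ) := by
    intro c k
    rcases eq_or_ne c 0 with rfl | hc
    · simp
    · rw [degree_C_mul hc, degree_eq_natDegree (hmonic k).ne_zero, hdeg]
  have hXPmon : ∀ k : ℕ, (X * P k).Monic := fun k => monic_X.mul (hmonic k)
  have hXPdeg : ∀ k : ℕ, (X * P k).natDegree = k + 1 := by
    intro k
    rw [monic_X.natDegree_mul (hmonic k), natDegree_X, hdeg]
    omega
  set q : Polynomial ℝ := X * P n - P (n + 1) - C a * P n - C b * P (n - 1) with hqdef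
  have hd1 : (X * P n - P (n + 1)).degree < ((n + 1 : ℕ) : WithBot ℕ) := by
    have h1 : (X * P n).degree = (P (n + 1)).degree := by
      rw [degree_eq_natDegree (hXPmon n).ne_zero,
        degree_eq_natDegree (hmonic (n + 1)).ne_zero, hXPdeg, hdeg]
    have h2 := Polynomial.degree_sub_lt h1 (hXPmon n).ne_zero
      (by rw [(hXPmon n).leadingCoeff, (hmonic (n + 1)).leadingCoeff])
    rwa [degree_eq_natDegree (hXPmon n).ne_zero, hXPdeg] at h2
  have hqdeg : q.degree < ((n + 1 : ℕ) : WithBot ℕ) := by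
    rw [hqdef]
    refine lt_of_le_of_lt (degree_sub_le _ _) (max_lt ?_ ?_)
    · refine lt_of_le_of_lt (degree_sub_le _ _) (max_lt hd1 ?_)
      refine lt_of_le_of_lt (hCle a n) ?_
      exact_mod_cast Nat.lt_succ_self n
    · refine lt_of_le_of_lt (hCle b (n - 1)) ?_
      exact_mod_cast (by omega : n - 1 < n + 1)
  have hq0 : q = 0 := by
    apply eq_zero_of_orth w hint P h horthJ hmonic hdeg hpos (n + 1) q hqdeg
    intro i hi
    have hsplit : X ^ 3 * (q * P i)
        = X ^ 3 * (P n * (X * P i)) - X ^ 3 * (P (n + 1) * P i)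
          - C a * (X ^ 3 * (P n * P i)) - C b * (X ^ 3 * (P (n - 1) * P i)) := by
      rw [hqdef]; ring
    rw [hsplit, Jf_sub w hint, Jf_sub w hint, Jf_sub w hint, Jf_Cmul w hint,
      Jf_Cmul w hint, horthJ, horthJ, horthJ]
    rcases eq_or_ne i n with hin | hin
    · -- i = n
      have hT : X ^ 3 * (P n * (X * P i)) = X ^ 3 * ((X * P n) * P n) := by
        rw [hin]; ring
      rw [hT, if_neg (by omega), if_pos hin.symm, if_neg (by omega), ha]
      field_simp [(hpos n).ne']
      ring
    rcases eq_or_ne i (n - 1) with hin1 | hin1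
    · -- i = n - 1
      set E : Polynomial ℝ := X * P (n - 1) - P n with hEdef
      have hEdeg : E.degree < ((n : ℕ) : WithBot ℕ) := by
        have h1 : (X * P (n - 1)).degree = (P n).degree := by
          rw [degree_eq_natDegree (hXPmon (n - 1)).ne_zero,
            degree_eq_natDegree (hmonic n).ne_zero, hXPdeg, hdeg]
          congr 1
          omega
        have h2 := Polynomial.degree_sub_lt h1 (hXPmon (n - 1)).ne_zero
          (by rw [(hXPmon (n - 1)).leadingCoeff, (hmonic n).leadingCoeff])
        rw [degree_eq_natDegree (hXPmon (n - 1)).ne_zero, hXPdeg] at h2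
        rw [hEdef]
        convert h2 using 2
        omega
      have hT : X ^ 3 * (P n * (X * P i))
          = X ^ 3 * (P n * P n) + X ^ 3 * (P n * E) := by
        rw [hin1, hEdef]; ring
      rw [hT, Jf_add w hint, horthJ, if_pos rfl,
        Jf_orth w hint P h horthJ hmonic hdeg n E hEdeg]
      rw [if_neg (by omega), if_neg (by omega), if_pos hin1.symm, hb]
      field_simp [(hpos (n - 1)).ne']
      ring
    · -- i < n - 1
      have hilt : i + 1 < n := by omega
      have hXPi : (X * P i).degree < ((n : ℕ) : WithBot ℕ) := by
        rw [degree_eq_natDegree (hXPmon i).ne_zero, hXPdeg]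
        exact_mod_cast hilt
      have hT : X ^ 3 * (P n * (X * P i)) = X ^ 3 * (P n * (X * P i)) := rfl
      rw [Jf_orth w hint P h horthJ hmonic hdeg n (X * P i) hXPi]
      rw [if_neg (by omega), if_neg (by omega), if_neg (by omega)]
      ring
  rw [hqdef] at hq0
  linear_combination hq0

end Aux
theorem stmt_5
    (α t : ℝ) (hα : 0 < α) (ht : 0 < t)
    (w : ℝ → ℝ)
    (hw : ∀ x : ℝ, x ≠ 0 → w x = (1 - x ^ 2) ^ α * Real.exp (-t / x ^ 2))
    (hw0 : w 0 = 0)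
    (P : ℕ → Polynomial ℝ)
    (hmonic : ∀ n, (P n).Monic)
    (hdeg : ∀ n, (P n).natDegree = n)
    (h : ℕ → ℝ)
    (hpos : ∀ n, 0 < h n)
    (horth : ∀ j k, (∫ x in (-1:ℝ)..1, (P j).eval x * (P k).eval x * w x)
      = if j = k then h j else 0)
    (R : ℕ → ℝ)
    (hR : ∀ n, R n = 2 * t / h n *
      ∫ y in (-1:ℝ)..1, ((P n).eval y) ^ 2 * w y / y ^ 2)
    (r : ℕ → ℝ) (hr0 : r 0 = 0)
    (hr : ∀ n : ℕ, 1 ≤ n → r n = 2 * t / h (n - 1) *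
      ∫ y in (-1:ℝ)..1, (P n).eval y * (P (n - 1)).eval y * w y / y ^ 3)
    :
    ∀ n : ℕ, R n = r (n + 1) + r n := by
  have hint : ∀ p : Polynomial ℝ,
      IntervalIntegrable (fun y => p.eval y * w y / y ^ 3) volume (-1) 1 :=
    fun p => integrable_aux hα ht hw hw0 p
  have horthJ : ∀ j k, Jf w (X ^ 3 * (P j * P k)) = if j = k then h j else 0 :=
    fun j k => by rw [Jf_cube w hw0]; exact horth j k
  have wsym : ∀ x, w (-x) = w x := by
    intro x
    rcases eq_or_ne x 0 with rfl | hx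
    · rw [neg_zero]
    · rw [hw (-x) (neg_ne_zero.2 hx), hw x hx, neg_pow]
      norm_num
  have hpar := parity w hint P h horthJ hw0 wsym hmonic hdeg hpos
  have hoddPP : ∀ m : ℕ, Jf w (P m * P m) = 0 := by
    intro m
    apply Jf_odd w wsym
    have h1 : ((-1:ℝ) ^ m) * (-1) ^ m = 1 := by rw [← mul_pow]; norm_num
    calc (P m * P m).comp (-X) = (C ((-1:ℝ) ^ m) * P m) * (C ((-1:ℝ) ^ m) * P m) := by
          rw [mul_comp, hpar m]
      _ = C (((-1:ℝ) ^ m) * (-1) ^ m) * (P m * P m) := by rw [C_mul]; ring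
      _ = P m * P m := by rw [h1, C_1, one_mul]
  have hI2 : ∀ m : ℕ, (∫ y in (-1:ℝ)..1, ((P m).eval y) ^ 2 * w y / y ^ 2)
      = Jf w (X * (P m * P m)) := by
    intro m
    rw [Jf]
    congr 1
    funext y
    rcases eq_or_ne y 0 with rfl | hy
    · simp [hw0]
    · rw [eval_mul, eval_X, eval_mul]
      field_simp
  have hJmul : ∀ j k : ℕ,
      (∫ y in (-1:ℝ)..1, (P j).eval y * (P k).eval y * w y / y ^ 3)
        = Jf w (P j * P k) := by
    intro j k
    rw [Jf]
    congr 1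
    funext y
    rw [eval_mul]
  intro n
  cases n with
  | zero =>
    obtain ⟨a, hrec⟩ := recur0 w hint P h horthJ hw0 hmonic hdeg hpos
    have hXPP : X * (P 0 * P 0) = P 1 * P 0 + C a * (P 0 * P 0) := by
      calc X * (P 0 * P 0) = (X * P 0) * P 0 := by ring
        _ = (P 1 + C a * P 0) * P 0 := by rw [hrec]
        _ = P 1 * P 0 + C a * (P 0 * P 0) := by ring
    have hr1 : r 1 = 2 * t / h 0 * Jf w (P 1 * P 0) := by
      rw [hr 1 le_rfl]
      norm_num [hJmul 1 0]
    rw [hR 0, hI2 0, hXPP, Jf_add w hint, Jf_Cmul w hint, hoddPP 0, mul_zero,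
      add_zero, hr0, add_zero, hr1]
  | succ m =>
    obtain ⟨a, hrec⟩ := recur1 w hint P h horthJ hw0 hmonic hdeg hpos (m + 1)
      (by omega)
    simp only [Nat.add_sub_cancel] at hrec
    have hXPP : X * (P (m + 1) * P (m + 1))
        = P (m + 2) * P (m + 1) + C a * (P (m + 1) * P (m + 1))
          + C (h (m + 1) / h m) * (P (m + 1) * P m) := by
      calc X * (P (m + 1) * P (m + 1)) = (X * P (m + 1)) * P (m + 1) := by ring
        _ = (P (m + 2) + C a * P (m + 1) + C (h (m + 1) / h m) * P m) * P (m + 1) := by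
            rw [hrec]
        _ = P (m + 2) * P (m + 1) + C a * (P (m + 1) * P (m + 1))
            + C (h (m + 1) / h m) * (P (m + 1) * P m) := by ring
    have hrs : r (m + 2) = 2 * t / h (m + 1) * Jf w (P (m + 2) * P (m + 1)) := by
      rw [hr (m + 2) (by omega)]
      norm_num [hJmul (m + 2) (m + 1)]
    have hrm : r (m + 1) = 2 * t / h m * Jf w (P (m + 1) * P m) := by
      rw [hr (m + 1) (by omega)]
      norm_num [hJmul (m + 1) m]
    rw [hR (m + 1), hI2 (m + 1), hXPP, Jf_add w hint, Jf_add w hint,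
      Jf_Cmul w hint, Jf_Cmul w hint, hoddPP (m + 1), mul_zero, add_zero,
      hrs, hrm]
    field_simp [(hpos (m + 1)).ne', (hpos m).ne']
end

section
/- For every n ≥ 0, the function t ↦ h_n(t) is differentiable on (0,∞) with h_n'(t) = -∫_{-1}^{1} P_n(x,t)^2·w(x,t)/x^2 dx; equivalently, 2t·(d/dt) ln h_n(t) = -R_n(t). -/
open Filter Real Set Topology

lemma aux_sq_atTop (t : ℝ) (ht : 0 < t) :
    Tendsto (fun x : ℝ => t / x ^ 2) (𝓝[≠] (0:ℝ)) atTop := by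
  have h1 : Tendsto (fun x : ℝ => x ^ 2) (𝓝[≠] (0:ℝ)) (𝓝[>] 0) := by
    rw [tendsto_nhdsWithin_iff]
    constructor
    · have : Tendsto (fun x : ℝ => x ^ 2) (𝓝 0) (𝓝 0) := by
        simpa using (continuous_pow 2).tendsto (0:ℝ)
      exact this.mono_left nhdsWithin_le_nhds
    · filter_upwards [self_mem_nhdsWithin] with x hx
      exact pow_pos (abs_pos.mpr hx) 2 |>.trans_le (by rw [sq_abs])
  have h2 : Tendsto (fun y : ℝ => y⁻¹) (𝓝[>] (0:ℝ)) atTop := tendsto_inv_nhdsGT_zero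
  have h3 := (h2.comp h1).const_mul_atTop ht
  simpa [div_eq_mul_inv, Function.comp] using h3

lemma aux_exp_tendsto (t : ℝ) (ht : 0 < t) :
    Tendsto (fun x : ℝ => Real.exp (-t / x ^ 2)) (𝓝[≠] (0:ℝ)) (𝓝 0) := by
  have h1 : Tendsto (fun x : ℝ => -(t / x ^ 2)) (𝓝[≠] (0:ℝ)) atBot :=
    tendsto_neg_atTop_atBot.comp (aux_sq_atTop t ht)
  have h2 := Real.tendsto_exp_atBot.comp h1
  refine h2.congr ?_
  intro x; simp [Function.comp, neg_div]

lemma aux_exp_div_tendsto (t : ℝ) (ht : 0 < t) :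
    Tendsto (fun x : ℝ => Real.exp (-t / x ^ 2) / x ^ 2) (𝓝[≠] (0:ℝ)) (𝓝 0) := by
  have h1 : Tendsto (fun u : ℝ => u * Real.exp (-u)) atTop (𝓝 0) := by
    simpa using tendsto_pow_mul_exp_neg_atTop_nhds_zero 1
  have h2 := (h1.comp (aux_sq_atTop t ht)).const_mul (1/t)
  rw [mul_zero] at h2
  refine h2.congr' ?_
  filter_upwards [self_mem_nhdsWithin] with x hx
  have hx2 : (x:ℝ) ^ 2 ≠ 0 := pow_ne_zero _ hx
  simp only [Function.comp]
  rw [neg_div]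
  field_simp

lemma cont_w (α t : ℝ) (hα : 0 < α) (ht : 0 < t) (v : ℝ → ℝ)
    (hv : ∀ x : ℝ, x ≠ 0 → v x = (1 - x ^ 2) ^ α * Real.exp (-t / x ^ 2))
    (hv0 : v 0 = 0) : Continuous v := by
  rw [continuous_iff_continuousAt]
  intro x
  by_cases hx : x = 0
  · subst hx
    rw [ContinuousAt, hv0]
    have hsup : Tendsto v (𝓝[≠] (0:ℝ) ⊔ pure 0) (𝓝 0) := by
      rw [tendsto_sup]
      constructor
      · have hb : Tendsto (fun x : ℝ => (1 - x ^ 2) ^ α) (𝓝[≠] (0:ℝ)) (𝓝 1) := by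
          have hc : ContinuousAt (fun x : ℝ => (1 - x ^ 2) ^ α) 0 := by
            refine ContinuousAt.rpow_const (by fun_prop) (Or.inl ?_)
            norm_num
          have := hc.tendsto.mono_left (nhdsWithin_le_nhds (s := {(0:ℝ)}ᶜ))
          simpa using this
        have := hb.mul (aux_exp_tendsto t ht)
        rw [mul_zero] at this
        refine this.congr' ?_
        filter_upwards [self_mem_nhdsWithin] with y hy
        exact (hv y hy).symm
      · rw [tendsto_pure_left]
        intro s hs
        simpa [hv0] using mem_of_mem_nhds hs
    rw [nhdsNE_sup_pure] at hsup
    exact hsup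
  · have hF : ContinuousAt (fun y : ℝ => (1 - y ^ 2) ^ α * Real.exp (-t / y ^ 2)) x := by
      refine ContinuousAt.mul (ContinuousAt.rpow_const (by fun_prop) (Or.inr hα.le)) ?_
      exact (Real.continuous_exp.continuousAt).comp
        (ContinuousAt.div continuousAt_const (by fun_prop) (pow_ne_zero 2 hx))
    refine hF.congr ?_
    filter_upwards [isOpen_compl_singleton.mem_nhds hx] with y hy
    exact (hv y hy).symm

lemma cont_w_div (α t : ℝ) (hα : 0 < α) (ht : 0 < t) (v : ℝ → ℝ)
    (hv : ∀ x : ℝ, x ≠ 0 → v x = (1 - x ^ 2) ^ α * Real.exp (-t / x ^ 2))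
    (hv0 : v 0 = 0) : Continuous (fun x => v x / x ^ 2) := by
  rw [continuous_iff_continuousAt]
  intro x
  by_cases hx : x = 0
  · subst hx
    have h0 : v 0 / (0:ℝ) ^ 2 = 0 := by simp [hv0]
    rw [ContinuousAt, h0]
    have hsup : Tendsto (fun x : ℝ => v x / x ^ 2) (𝓝[≠] (0:ℝ) ⊔ pure 0) (𝓝 0) := by
      rw [tendsto_sup]
      constructor
      · have hb : Tendsto (fun x : ℝ => (1 - x ^ 2) ^ α) (𝓝[≠] (0:ℝ)) (𝓝 1) := by
          have hc : ContinuousAt (fun x : ℝ => (1 - x ^ 2) ^ α) 0 := by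
            refine ContinuousAt.rpow_const (by fun_prop) (Or.inl ?_)
            norm_num
          have := hc.tendsto.mono_left (nhdsWithin_le_nhds (s := {(0:ℝ)}ᶜ))
          simpa using this
        have := hb.mul (aux_exp_div_tendsto t ht)
        rw [mul_zero] at this
        refine this.congr' ?_
        filter_upwards [self_mem_nhdsWithin] with y hy
        rw [hv y hy, mul_div_assoc]
      · rw [tendsto_pure_left]
        intro s hs
        simpa [h0] using mem_of_mem_nhds hs
    rw [nhdsNE_sup_pure] at hsup
    exact hsup
  · exact ContinuousAt.div ((cont_w α t hα ht v hv hv0).continuousAt) (by fun_prop)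
      (pow_ne_zero 2 hx)
theorem stmt_11
    (α : ℝ) (hα : 0 < α)
    (w : ℝ → ℝ → ℝ)
    (hw : ∀ t : ℝ, 0 < t → ∀ x : ℝ, x ≠ 0 →
      w t x = (1 - x ^ 2) ^ α * Real.exp (-t / x ^ 2))
    (hw0 : ∀ t : ℝ, 0 < t → w t 0 = 0)
    (P : ℕ → ℝ → Polynomial ℝ)
    (hmonic : ∀ n : ℕ, ∀ t : ℝ, 0 < t → (P n t).Monic)
    (hdeg : ∀ n : ℕ, ∀ t : ℝ, 0 < t → (P n t).natDegree = n)
    (h : ℕ → ℝ → ℝ)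
    (hpos : ∀ n : ℕ, ∀ t : ℝ, 0 < t → 0 < h n t)
    (horth : ∀ t : ℝ, 0 < t → ∀ j k,
      (∫ x in (-1:ℝ)..1, (P j t).eval x * (P k t).eval x * w t x)
        = if j = k then h j t else 0)
    (hcoeff : ∀ n i : ℕ, DifferentiableOn ℝ (fun s => (P n s).coeff i) (Set.Ioi 0))
    (hswap : ∀ n m : ℕ, ∀ t : ℝ, 0 < t →
      HasDerivAt (fun s => ∫ x in (-1:ℝ)..1, (P n s).eval x * (P m s).eval x * w s x)
        (∫ x in (-1:ℝ)..1, deriv (fun s => (P n s).eval x * (P m s).eval x * w s x) t) t)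
    (R : ℕ → ℝ → ℝ)
    (hR : ∀ n : ℕ, ∀ t : ℝ, 0 < t → R n t = 2 * t / h n t *
      ∫ y in (-1:ℝ)..1, ((P n t).eval y) ^ 2 * w t y / y ^ 2)
    :
    ∀ n : ℕ, ∀ t : ℝ, 0 < t →
      HasDerivAt (h n) (-(∫ x in (-1:ℝ)..1, ((P n t).eval x) ^ 2 * w t x / x ^ 2)) t ∧
      2 * t * deriv (fun s => Real.log (h n s)) t = -(R n t) := by
  intro n t ht
  have hmem : Set.Ioi (0:ℝ) ∈ 𝓝 t := isOpen_Ioi.mem_nhds ht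
  have cw : Continuous (w t) := cont_w α t hα ht (w t) (fun x hx => hw t ht x hx) (hw0 t ht)
  have cw2 : Continuous (fun x : ℝ => w t x / x ^ 2) :=
    cont_w_div α t hα ht (w t) (fun x hx => hw t ht x hx) (hw0 t ht)
  have cP : Continuous fun x : ℝ => (P n t).eval x := (P n t).continuous
  set I : ℝ := ∫ x in (-1:ℝ)..1, ((P n t).eval x) ^ 2 * w t x / x ^ 2 with hI
  set q : Polynomial ℝ :=
    ∑ i ∈ Finset.range n, Polynomial.C (deriv (fun s => (P n s).coeff i) t) * Polynomial.X ^ i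
    with hq
  have hqeval : ∀ x : ℝ,
      q.eval x = ∑ i ∈ Finset.range n, deriv (fun s => (P n s).coeff i) t * x ^ i := by
    intro x
    rw [hq, Polynomial.eval_finset_sum]
    simp
  have hdc : ∀ i, HasDerivAt (fun s => (P n s).coeff i) (deriv (fun s => (P n s).coeff i) t) t :=
    fun i => ((hcoeff n i).differentiableAt hmem).hasDerivAt
  have hdn : deriv (fun s => (P n s).coeff n) t = 0 := by
    have he : (fun s => (P n s).coeff n) =ᶠ[𝓝 t] fun _ => (1:ℝ) := by
      filter_upwards [hmem] with s hs
      have h1 := (hmonic n s hs).coeff_natDegree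
      rwa [hdeg n s hs] at h1
    rw [he.deriv_eq]
    exact deriv_const _ _
  have hPd : ∀ x : ℝ, HasDerivAt (fun s => (P n s).eval x) (q.eval x) t := by
    intro x
    have H : HasDerivAt (fun s => ∑ i ∈ Finset.range (n+1), (P n s).coeff i * x ^ i)
        (∑ i ∈ Finset.range (n+1), deriv (fun s => (P n s).coeff i) t * x ^ i) t :=
      HasDerivAt.fun_sum fun i _ => (hdc i).mul_const _
    have he : (fun s => (P n s).eval x)
        =ᶠ[𝓝 t] fun s => ∑ i ∈ Finset.range (n+1), (P n s).coeff i * x ^ i := by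
      filter_upwards [hmem] with s hs
      exact Polynomial.eval_eq_sum_range' (by rw [hdeg n s hs]; omega) x
    have H2 := H.congr_of_eventuallyEq he
    rwa [Finset.sum_range_succ, hdn, zero_mul, add_zero, ← hqeval x] at H2
  have hwd : ∀ x : ℝ, x ≠ 0 → HasDerivAt (fun s => w s x) (-(w t x / x ^ 2)) t := by
    intro x hx
    have hx2 : x ^ 2 ≠ 0 := pow_ne_zero 2 hx
    have h1 : HasDerivAt (fun s : ℝ => -s / x ^ 2) (-(1 / x ^ 2)) t := by
      have := ((hasDerivAt_id t).neg).div_const (x ^ 2)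
      simpa [neg_div] using this
    have H := (h1.exp).const_mul ((1 - x ^ 2) ^ α)
    have he : (fun s => w s x) =ᶠ[𝓝 t] fun s => (1 - x ^ 2) ^ α * Real.exp (-s / x ^ 2) := by
      filter_upwards [hmem] with s hs
      exact hw s hs x hx
    have h2 := H.congr_of_eventuallyEq he
    refine h2.congr_deriv ?_
    rw [hw t ht x hx]
    ring
  have key : ∀ x : ℝ, x ≠ 0 →
      deriv (fun s => (P n s).eval x * (P n s).eval x * w s x) t
        = 2 * (q.eval x * (P n t).eval x * w t x) - ((P n t).eval x) ^ 2 * w t x / x ^ 2 := by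
    intro x hx
    have H := ((hPd x).fun_mul (hPd x)).fun_mul (hwd x hx)
    rw [H.deriv]
    ring
  have i1 : IntervalIntegrable (fun x : ℝ => 2 * (q.eval x * (P n t).eval x * w t x))
      MeasureTheory.volume (-1) 1 :=
    (continuous_const.mul ((q.continuous.mul cP).mul cw)).intervalIntegrable _ _
  have i2 : IntervalIntegrable (fun x : ℝ => ((P n t).eval x) ^ 2 * w t x / x ^ 2)
      MeasureTheory.volume (-1) 1 := by
    have hfe : (fun x : ℝ => ((P n t).eval x) ^ 2 * w t x / x ^ 2)
        = fun x => ((P n t).eval x) ^ 2 * (w t x / x ^ 2) := by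
      funext x; rw [mul_div_assoc]
    rw [hfe]
    exact ((cP.pow 2).mul cw2).intervalIntegrable _ _
  have imono : ∀ r : Polynomial ℝ,
      IntervalIntegrable (fun x : ℝ => r.eval x * (P n t).eval x * w t x)
        MeasureTheory.volume (-1) 1 :=
    fun r => ((r.continuous.mul cP).mul cw).intervalIntegrable _ _
  have mono_orth : ∀ i : ℕ, i < n →
      (∫ x in (-1:ℝ)..1, x ^ i * (P n t).eval x * w t x) = 0 := by
    intro i
    induction i using Nat.strong_induction_on with
    | _ i ih =>
      intro hi
      have hmon := hmonic i t ht
      have hdi := hdeg i t ht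
      have hsplit : ∀ x : ℝ, x ^ i = (P i t).eval x - ((P i t).eraseLead).eval x := by
        intro x
        have h1 := Polynomial.eraseLead_add_C_mul_X_pow (P i t)
        rw [hmon.leadingCoeff, hdi, map_one, one_mul] at h1
        have h2 := congrArg (Polynomial.eval x) h1
        simp only [Polynomial.eval_add, Polynomial.eval_pow, Polynomial.eval_X] at h2
        linarith
      have hzero : (∫ x in (-1:ℝ)..1, ((P i t).eraseLead).eval x * (P n t).eval x * w t x) = 0 := by
        by_cases hr : (P i t).eraseLead = 0
        · simp [hr]
        · have hrd : ((P i t).eraseLead).natDegree < i := by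
            have hd0 := Polynomial.degree_eraseLead_lt hmon.ne_zero
            have := Polynomial.natDegree_lt_natDegree hr hd0
            rwa [hdi] at this
          calc (∫ x in (-1:ℝ)..1, ((P i t).eraseLead).eval x * (P n t).eval x * w t x)
              = ∫ x in (-1:ℝ)..1, ∑ j ∈ Finset.range i,
                  ((P i t).eraseLead).coeff j * (x ^ j * (P n t).eval x * w t x) := by
                apply intervalIntegral.integral_congr
                intro x _
                dsimp only
                rw [Polynomial.eval_eq_sum_range' hrd x, Finset.sum_mul, Finset.sum_mul]
                exact Finset.sum_congr rfl fun j _ => by ring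
            _ = ∑ j ∈ Finset.range i, ∫ x in (-1:ℝ)..1,
                  ((P i t).eraseLead).coeff j * (x ^ j * (P n t).eval x * w t x) := by
                apply intervalIntegral.integral_finset_sum
                intro j _
                exact (continuous_const.mul (((continuous_pow j).mul cP).mul cw)).intervalIntegrable _ _
            _ = 0 := by
                apply Finset.sum_eq_zero
                intro j hj
                rw [intervalIntegral.integral_const_mul, ih j (Finset.mem_range.mp hj)
                  ((Finset.mem_range.mp hj).trans hi), mul_zero]
      calc (∫ x in (-1:ℝ)..1, x ^ i * (P n t).eval x * w t x)
          = ∫ x in (-1:ℝ)..1, ((P i t).eval x * (P n t).eval x * w t x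
              - ((P i t).eraseLead).eval x * (P n t).eval x * w t x) := by
            apply intervalIntegral.integral_congr
            intro x _
            dsimp only
            rw [hsplit x]; ring
        _ = (∫ x in (-1:ℝ)..1, (P i t).eval x * (P n t).eval x * w t x)
              - ∫ x in (-1:ℝ)..1, ((P i t).eraseLead).eval x * (P n t).eval x * w t x :=
            intervalIntegral.integral_sub (imono _) (imono _)
        _ = 0 := by
            rw [horth t ht i n, if_neg (Nat.ne_of_lt hi), hzero, sub_zero]
  have orthq : (∫ x in (-1:ℝ)..1, q.eval x * (P n t).eval x * w t x) = 0 := by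
    calc (∫ x in (-1:ℝ)..1, q.eval x * (P n t).eval x * w t x)
        = ∫ x in (-1:ℝ)..1, ∑ i ∈ Finset.range n,
            deriv (fun s => (P n s).coeff i) t * (x ^ i * (P n t).eval x * w t x) := by
          apply intervalIntegral.integral_congr
          intro x _
          dsimp only
          rw [hqeval x, Finset.sum_mul, Finset.sum_mul]
          exact Finset.sum_congr rfl fun j _ => by ring
      _ = ∑ i ∈ Finset.range n, ∫ x in (-1:ℝ)..1,
            deriv (fun s => (P n s).coeff i) t * (x ^ i * (P n t).eval x * w t x) := by
          apply intervalIntegral.integral_finset_sum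
          intro j _
          exact (continuous_const.mul (((continuous_pow j).mul cP).mul cw)).intervalIntegrable _ _
      _ = 0 := by
          apply Finset.sum_eq_zero
          intro i hi
          rw [intervalIntegral.integral_const_mul, mono_orth i (Finset.mem_range.mp hi), mul_zero]
  have h0ae : ∀ᵐ x : ℝ, x ≠ 0 := by
    refine MeasureTheory.ae_iff.mpr ?_
    simp only [not_not]
    simp [Set.setOf_eq_eq_singleton, Real.volume_singleton]
  have hInt : (∫ x in (-1:ℝ)..1, deriv (fun s => (P n s).eval x * (P n s).eval x * w s x) t)
      = -I := by
    have e1 : (∫ x in (-1:ℝ)..1, deriv (fun s => (P n s).eval x * (P n s).eval x * w s x) t)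
        = ∫ x in (-1:ℝ)..1, (2 * (q.eval x * (P n t).eval x * w t x)
            - ((P n t).eval x) ^ 2 * w t x / x ^ 2) := by
      apply intervalIntegral.integral_congr_ae
      filter_upwards [h0ae] with x hx _
      exact key x hx
    rw [e1, intervalIntegral.integral_sub i1 i2, intervalIntegral.integral_const_mul, orthq,
      mul_zero, zero_sub, hI]
  have hh : (h n) =ᶠ[𝓝 t] fun s => ∫ x in (-1:ℝ)..1, (P n s).eval x * (P n s).eval x * w s x := by
    filter_upwards [hmem] with s hs
    have h1 := horth s hs n n
    rw [if_pos rfl] at h1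
    exact h1.symm
  have hd : HasDerivAt (h n) (-I) t := by
    have H := (hswap n n t ht).congr_of_eventuallyEq hh
    rwa [hInt] at H
  refine ⟨hd, ?_⟩
  have hne : h n t ≠ 0 := (hpos n t ht).ne'
  have hlog : HasDerivAt (fun s => Real.log (h n s)) (-I / h n t) t := hd.log hne
  rw [hlog.deriv, hR n t ht, ← hI]
  field_simp
end
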